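/- arXiv:1704.04145 — 3 statements merged into one kernel-verified Lean document; each statement's English description precedes it below -/
import Mathlib

section
/- Let G be a finite simple graph with no isolated vertices that is (H1, H2, C6)-free, and let S be an S(G)-set. Then γt(G) = 2γ(G) if and only if S is both a packing and a dominating set of G. -/
open SimpleGraph

namespace TotalDom

variable {V : Type*}

/-- The closed neighborhood `N[v]` of a vertex. -/
def cnbr (G : SimpleGraph V) (v : V) : Set V := insert v (G.neighborSet v)

/-- `S` is a dominating set: every vertex outside `S` has a neighbor in `S`. -/
def IsDomSet (G : SimpleGraph V) (S : Set V) : Prop := ∀ v ∉ S, ∃ u ∈ S, G.Adj u v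

/-- `S` is a total dominating set: every vertex has a neighbor in `S`. -/
def IsTotalDomSet (G : SimpleGraph V) (S : Set V) : Prop := ∀ v : V, ∃ u ∈ S, G.Adj u v

/-- The domination number `γ(G)`. -/
noncomputable def domNum (G : SimpleGraph V) : ℕ :=
  sInf {n | ∃ S : Set V, IsDomSet G S ∧ S.ncard = n}

/-- The total domination number `γₜ(G)`. -/
noncomputable def totalDomNum (G : SimpleGraph V) : ℕ :=
  sInf {n | ∃ S : Set V, IsTotalDomSet G S ∧ S.ncard = n}

/-- A minimum dominating set (γ-set). -/
def IsMinDomSet (G : SimpleGraph V) (S : Set V) : Prop := IsDomSet G S ∧ S.ncard = domNum G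

/-- `S` is a packing: closed neighborhoods of distinct members are disjoint. -/
def IsPacking (G : SimpleGraph V) (S : Set V) : Prop :=
  S.Pairwise fun u v => Disjoint (cnbr G u) (cnbr G v)

/-- `M(v)`: neighbors of `v` having a neighbor outside `N[v]`. -/
def Mset (G : SimpleGraph V) (v : V) : Set V :=
  {u | G.Adj v u ∧ ∃ w, G.Adj u w ∧ w ∉ cnbr G v}

/-- `D(v)`: neighbors `u` of `v` that are not true twins of `v` with `N[u] ⊆ N[v]`. -/
def Dset (G : SimpleGraph V) (v : V) : Set V :=
  {u | G.Adj v u ∧ cnbr G u ≠ cnbr G v ∧ cnbr G u ⊆ cnbr G v}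

/-- `T(v)`: `v` together with its true twins. -/
def Tset (G : SimpleGraph V) (v : V) : Set V := {u | cnbr G u = cnbr G v}

/-- A non-isolated vertex `v` is special if no `u ∈ M(v)` satisfies `D(v) ⊆ N(u)`. -/
def Special (G : SimpleGraph V) (v : V) : Prop :=
  (G.neighborSet v).Nonempty ∧ ¬ ∃ u ∈ Mset G v, Dset G v ⊆ G.neighborSet u

/-- An `S(G)`-set: a set of special vertices containing exactly one vertex from each
true-twin equivalence class of special vertices. -/
def IsSGSet (G : SimpleGraph V) (S : Set V) : Prop :=
  (∀ u ∈ S, Special G u) ∧ ∀ v, Special G v → ∃! u, u ∈ S ∧ u ∈ Tset G v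

/-- `G` has no isolated vertices. -/
def NoIsolated (G : SimpleGraph V) : Prop := ∀ v : V, ∃ u, G.Adj v u

/-- `G` contains no induced copy of `H`. -/
def Free {α : Type*} (H : SimpleGraph α) (G : SimpleGraph V) : Prop := IsEmpty (H ↪g G)

/-- `H₁`: a 6-cycle plus one chord between vertices at distance two along the cycle. -/
def H1 : SimpleGraph (Fin 6) := cycleGraph 6 ⊔ fromEdgeSet {s(0, 2)}

/-- `H₂`: a 6-cycle `x₁x₂x₃x₄x₅x₆` plus the chords `x₂x₆` and `x₃x₅`. -/
def H2 : SimpleGraph (Fin 6) := cycleGraph 6 ⊔ fromEdgeSet {s(1, 5), s(2, 4)}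

/-- A leaf: a vertex of degree one. -/
def IsLeaf (G : SimpleGraph V) (v : V) : Prop := ∃! u, G.Adj v u

/-- A support vertex: a vertex adjacent to a leaf. -/
def IsSupport (G : SimpleGraph V) (v : V) : Prop := ∃ u, G.Adj v u ∧ IsLeaf G u

/-- `sup(G)`: the set of support vertices. -/
def supSet (G : SimpleGraph V) : Set V := {v | IsSupport G v}

/-! ### Auxiliary lemmas -/

section Aux

variable {G : SimpleGraph V}

lemma mem_cnbr {v u : V} : u ∈ cnbr G v ↔ u = v ∨ G.Adj v u := by
  simp [cnbr]

lemma mem_cnbr_self (G : SimpleGraph V) (v : V) : v ∈ cnbr G v := Set.mem_insert _ _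

lemma mem_cnbr_of_adj {v u : V} (h : G.Adj v u) : u ∈ cnbr G v := mem_cnbr.2 (Or.inr h)

lemma adj_of_mem_cnbr {v u : V} (h : u ∈ cnbr G v) (hne : u ≠ v) : G.Adj v u :=
  (mem_cnbr.1 h).resolve_left hne

lemma not_adj_of_not_mem_cnbr {v u : V} (h : u ∉ cnbr G v) : ¬ G.Adj v u :=
  fun ha => h (mem_cnbr_of_adj ha)

lemma ne_of_not_mem_cnbr {v u : V} (h : u ∉ cnbr G v) : v ≠ u :=
  fun he => h (he ▸ mem_cnbr_self G v)

instance : DecidableRel H1.Adj := fun a b => decidable_of_iff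
  ((cycleGraph 6).Adj a b ∨ ((a = 0 ∧ b = 2) ∨ (a = 2 ∧ b = 0))) (by
    rw [show H1.Adj a b ↔ _ from Iff.rfl, H1, sup_adj, fromEdgeSet_adj]
    constructor
    · rintro (h | (⟨rfl, rfl⟩ | ⟨rfl, rfl⟩)) <;> simp_all [Sym2.eq_iff]
    · rintro (h | h) <;> simp_all [Sym2.eq_iff])

instance : DecidableRel H2.Adj := fun a b => decidable_of_iff
  ((cycleGraph 6).Adj a b ∨ ((a = 1 ∧ b = 5) ∨ (a = 5 ∧ b = 1)) ∨
    ((a = 2 ∧ b = 4) ∨ (a = 4 ∧ b = 2))) (by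
    rw [show H2.Adj a b ↔ _ from Iff.rfl, H2, sup_adj, fromEdgeSet_adj]
    constructor
    · rintro (h | (⟨rfl, rfl⟩ | ⟨rfl, rfl⟩) | (⟨rfl, rfl⟩ | ⟨rfl, rfl⟩)) <;>
        simp_all [Sym2.eq_iff]
    · rintro (h | h) <;> simp_all [Sym2.eq_iff])

/-- Helper to build graph embeddings from `Fin 6`. -/
def mkEmb (H : SimpleGraph (Fin 6)) (f : Fin 6 → V)
    (hinj : Function.Injective f) (h : ∀ i j, G.Adj (f i) (f j) ↔ H.Adj i j) : H ↪g G :=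
  ⟨⟨f, hinj⟩, h _ _⟩

set_option maxHeartbeats 2000000 in
/-- The key geometric lemma: in an `(H₁,H₂,C₆)`-free graph, a six-cycle
`a x₁ y₁ d y₂ x₂` with the specified non-edges must have one of the two "long" chords
`x₁y₂` or `x₂y₁`. -/
lemma six_lemma (hH1 : Free H1 G) (hH2 : Free H2 G) (hC6 : Free (cycleGraph 6) G)
    {a x1 y1 d y2 x2 : V}
    (e1 : G.Adj a x1) (e2 : G.Adj x1 y1) (e3 : G.Adj y1 d) (e4 : G.Adj d y2)
    (e5 : G.Adj y2 x2) (e6 : G.Adj x2 a)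
    (n1 : ¬ G.Adj a y1) (n2 : ¬ G.Adj a y2) (n3 : ¬ G.Adj a d)
    (n4 : ¬ G.Adj x1 d) (n5 : ¬ G.Adj x2 d)
    (n6 : ¬ G.Adj x1 y2) (n7 : ¬ G.Adj x2 y1)
    (q1 : a ≠ y1) (q2 : a ≠ y2) (q3 : a ≠ d) (q4 : x1 ≠ d) (q5 : x2 ≠ d)
    (q6 : x1 ≠ y2) (q7 : x2 ≠ y1) (q8 : x1 ≠ x2) (q9 : y1 ≠ y2) : False := by
  have e1' := e1.symm; have e2' := e2.symm; have e3' := e3.symm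
  have e4' := e4.symm; have e5' := e5.symm; have e6' := e6.symm
  have n1' : ¬ G.Adj y1 a := fun h => n1 h.symm
  have n2' : ¬ G.Adj y2 a := fun h => n2 h.symm
  have n3' : ¬ G.Adj d a := fun h => n3 h.symm
  have n4' : ¬ G.Adj d x1 := fun h => n4 h.symm
  have n5' : ¬ G.Adj d x2 := fun h => n5 h.symm
  have n6' : ¬ G.Adj y2 x1 := fun h => n6 h.symm
  have n7' : ¬ G.Adj y1 x2 := fun h => n7 h.symm
  have p1 := e1.ne; have p2 := e2.ne; have p3 := e3.ne
  have p4 := e4.ne; have p5 := e5.ne; have p6 := e6.ne.symm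
  have q1' := q1.symm; have q2' := q2.symm; have q3' := q3.symm
  have q4' := q4.symm; have q5' := q5.symm; have q6' := q6.symm
  have q7' := q7.symm; have q8' := q8.symm; have q9' := q9.symm
  have p1' := p1.symm; have p2' := p2.symm; have p3' := p3.symm
  have p4' := p4.symm; have p5' := p5.symm; have p6' := p6.symm
  by_cases c1 : G.Adj x1 x2 <;> by_cases c2 : G.Adj y1 y2
  · have c1' := c1.symm; have c2' := c2.symm
    have c1n := c1.ne; have c1n' := c1n.symm
    have c2n := c2.ne; have c2n' := c2n.symm
    exact hH2.false (mkEmb H2 ![a, x1, y1, d, y2, x2]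
      (by
        have : ∀ i j : Fin 6, ![a, x1, y1, d, y2, x2] i = ![a, x1, y1, d, y2, x2] j → i = j := by
          simp only [Fin.forall_fin_succ, Matrix.cons_val_zero, Matrix.cons_val_succ]
          and_intros <;>
            first
              | exact fun i => i.elim0
              | trivial
              | exact fun _ => rfl
              | exact fun h => absurd h (by assumption)
        exact fun i j => this i j)
      (by
        simp only [Fin.forall_fin_succ, Matrix.cons_val_zero, Matrix.cons_val_succ]
        and_intros <;>
          first
            | exact fun i => i.elim0
            | trivial
            | exact iff_of_false (fun h => h.ne rfl) (by decide)
            | exact iff_of_true (by assumption) (by decide)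
            | exact iff_of_false (by assumption) (by decide)))
  · have c1' := c1.symm
    have c1n := c1.ne; have c1n' := c1n.symm
    have c2' : ¬ G.Adj y2 y1 := fun h => c2 h.symm
    exact hH1.false (mkEmb H1 ![x2, a, x1, y1, d, y2]
      (by
        have : ∀ i j : Fin 6, ![x2, a, x1, y1, d, y2] i = ![x2, a, x1, y1, d, y2] j → i = j := by
          simp only [Fin.forall_fin_succ, Matrix.cons_val_zero, Matrix.cons_val_succ]
          and_intros <;>
            first
              | exact fun i => i.elim0
              | trivial
              | exact fun _ => rfl
              | exact fun h => absurd h (by assumption)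
        exact fun i j => this i j)
      (by
        simp only [Fin.forall_fin_succ, Matrix.cons_val_zero, Matrix.cons_val_succ]
        and_intros <;>
          first
            | exact fun i => i.elim0
            | trivial
            | exact iff_of_false (fun h => h.ne rfl) (by decide)
            | exact iff_of_true (by assumption) (by decide)
            | exact iff_of_false (by assumption) (by decide)))
  · have c2' := c2.symm
    have c2n := c2.ne; have c2n' := c2n.symm
    have c1' : ¬ G.Adj x2 x1 := fun h => c1 h.symm
    exact hH1.false (mkEmb H1 ![y2, d, y1, x1, a, x2]
      (by
        have : ∀ i j : Fin 6, ![y2, d, y1, x1, a, x2] i = ![y2, d, y1, x1, a, x2] j → i = j := by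
          simp only [Fin.forall_fin_succ, Matrix.cons_val_zero, Matrix.cons_val_succ]
          and_intros <;>
            first
              | exact fun i => i.elim0
              | trivial
              | exact fun _ => rfl
              | exact fun h => absurd h (by assumption)
        exact fun i j => this i j)
      (by
        simp only [Fin.forall_fin_succ, Matrix.cons_val_zero, Matrix.cons_val_succ]
        and_intros <;>
          first
            | exact fun i => i.elim0
            | trivial
            | exact iff_of_false (fun h => h.ne rfl) (by decide)
            | exact iff_of_true (by assumption) (by decide)
            | exact iff_of_false (by assumption) (by decide)))
  · have c1' : ¬ G.Adj x2 x1 := fun h => c1 h.symm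
    have c2' : ¬ G.Adj y2 y1 := fun h => c2 h.symm
    exact hC6.false (mkEmb (cycleGraph 6) ![a, x1, y1, d, y2, x2]
      (by
        have : ∀ i j : Fin 6, ![a, x1, y1, d, y2, x2] i = ![a, x1, y1, d, y2, x2] j → i = j := by
          simp only [Fin.forall_fin_succ, Matrix.cons_val_zero, Matrix.cons_val_succ]
          and_intros <;>
            first
              | exact fun i => i.elim0
              | trivial
              | exact fun _ => rfl
              | exact fun h => absurd h (by assumption)
        exact fun i j => this i j)
      (by
        simp only [Fin.forall_fin_succ, Matrix.cons_val_zero, Matrix.cons_val_succ]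
        and_intros <;>
          first
            | exact fun i => i.elim0
            | trivial
            | exact iff_of_false (fun h => h.ne rfl) (by decide)
            | exact iff_of_true (by assumption) (by decide)
            | exact iff_of_false (by assumption) (by decide)))

end Aux


/-! ### Domination number basics -/

section DomBasics

variable [Fintype V] {G : SimpleGraph V}

lemma exists_minDomSet (G : SimpleGraph V) :
    ∃ D : Set V, IsDomSet G D ∧ D.ncard = domNum G := by
  have hne : {n | ∃ S : Set V, IsDomSet G S ∧ S.ncard = n}.Nonempty :=
    ⟨(Set.univ : Set V).ncard, Set.univ, fun v hv => absurd (Set.mem_univ v) hv, rfl⟩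
  obtain ⟨S, hS, hSc⟩ := Nat.sInf_mem hne
  exact ⟨S, hS, hSc⟩

lemma domNum_le {D : Set V} (h : IsDomSet G D) : domNum G ≤ D.ncard :=
  Nat.sInf_le ⟨D, h, rfl⟩

lemma totalDomNum_le {T : Set V} (h : IsTotalDomSet G T) : totalDomNum G ≤ T.ncard :=
  Nat.sInf_le ⟨T, h, rfl⟩

lemma exists_minTotalDomSet (hiso : NoIsolated G) :
    ∃ T : Set V, IsTotalDomSet G T ∧ T.ncard = totalDomNum G := by
  have hne : {n | ∃ S : Set V, IsTotalDomSet G S ∧ S.ncard = n}.Nonempty :=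
    ⟨(Set.univ : Set V).ncard, Set.univ, fun v => by
      obtain ⟨u, hu⟩ := hiso v
      exact ⟨u, Set.mem_univ u, hu.symm⟩, rfl⟩
  obtain ⟨T, hT, hTc⟩ := Nat.sInf_mem hne
  exact ⟨T, hT, hTc⟩

lemma exists_dominator {D : Set V} (hD : IsDomSet G D) (x : V) :
    ∃ d, d ∈ D ∧ x ∈ cnbr G d := by
  by_cases hx : x ∈ D
  · exact ⟨x, hx, mem_cnbr_self G x⟩
  · obtain ⟨d, hd, hadj⟩ := hD x hx
    exact ⟨d, hd, mem_cnbr_of_adj hadj⟩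

lemma totalDomNum_le_two_mul_domNum (hiso : NoIsolated G) :
    totalDomNum G ≤ 2 * domNum G := by
  obtain ⟨D, hD, hDc⟩ := exists_minDomSet G
  choose nb hnb using hiso
  have hT : IsTotalDomSet G (D ∪ nb '' D) := by
    intro x
    by_cases hx : x ∈ D
    · exact ⟨nb x, Or.inr ⟨x, hx, rfl⟩, (hnb x).symm⟩
    · obtain ⟨u, hu, hadj⟩ := hD x hx
      exact ⟨u, Or.inl hu, hadj⟩
  calc totalDomNum G ≤ (D ∪ nb '' D).ncard := totalDomNum_le hT
    _ ≤ D.ncard + (nb '' D).ncard := Set.ncard_union_le _ _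
    _ ≤ D.ncard + D.ncard := by
        have := Set.ncard_image_le (s := D) (f := nb) (Set.toFinite D)
        omega
    _ = 2 * domNum G := by rw [hDc]; ring

/-- In any total dominating set, a special vertex has at least two members of the
total dominating set in its closed neighborhood. -/
lemma special_two {T : Set V} (hT : IsTotalDomSet G T) {x : V} (hx : Special G x) :
    ∃ a, a ∈ T ∩ cnbr G x ∧ ∃ b, b ∈ T ∩ cnbr G x ∧ a ≠ b := by
  obtain ⟨u, huT, hux⟩ := hT x
  have humem : u ∈ cnbr G x := mem_cnbr_of_adj hux.symm
  by_contra hcon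
  push_neg at hcon
  have h1 : ∀ b ∈ T ∩ cnbr G x, b = u := by
    intro b hb
    by_contra hbne
    exact hbne (hcon u ⟨huT, humem⟩ b hb).symm
  obtain ⟨z, hzT, hzu⟩ := hT u
  have hznot : z ∉ cnbr G x := by
    intro hz
    have := h1 z ⟨hzT, hz⟩
    subst this
    exact G.loopless.irrefl z hzu
  have huM : u ∈ Mset G x := ⟨hux.symm, z, hzu.symm, hznot⟩
  have hsub : Dset G x ⊆ G.neighborSet u := by
    intro t ht
    obtain ⟨hxt, htne, htsub⟩ := ht
    obtain ⟨z', hz'T, hz't⟩ := hT t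
    have : z' ∈ cnbr G x := htsub (mem_cnbr_of_adj hz't.symm)
    have hz'u := h1 z' ⟨hz'T, this⟩
    subst hz'u
    exact hz't
  exact hx.2 ⟨u, huM, hsub⟩

/-- Counting: a packing of special vertices forces any total dominating set to have
at least twice as many vertices. -/
lemma two_mul_packing_le {P T : Set V} (hpack : IsPacking G P)
    (hsp : ∀ x ∈ P, Special G x) (hT : IsTotalDomSet G T) :
    2 * P.ncard ≤ T.ncard := by
  classical
  have key : ∀ x : P, ∃ p : V × V,
      (p.1 ∈ T ∩ cnbr G (x : V)) ∧ (p.2 ∈ T ∩ cnbr G (x : V)) ∧ p.1 ≠ p.2 := by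
    rintro ⟨x, hx⟩
    obtain ⟨a, ha, b, hb, hab⟩ := special_two hT (hsp x hx)
    exact ⟨(a, b), ha, hb, hab⟩
  choose g hg1 hg2 hg3 using key
  let F : P × Bool → T := fun q =>
    if q.2 then ⟨(g q.1).1, (hg1 q.1).1⟩ else ⟨(g q.1).2, (hg2 q.1).1⟩
  have hmem : ∀ (x : P) (i : Bool), ((F (x, i)) : V) ∈ cnbr G (x : V) := by
    intro x i
    cases i
    · simpa [F] using (hg2 x).2
    · simpa [F] using (hg1 x).2
  have Finj : Function.Injective F := by
    rintro ⟨x, i⟩ ⟨x', i'⟩ h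
    have hval : ((F (x, i)) : V) = ((F (x', i')) : V) := congrArg Subtype.val h
    by_cases hxx : x = x'
    · subst hxx
      have : i = i' := by
        cases i <;> cases i'
        · rfl
        · exfalso; apply hg3 x
          simpa [F] using hval.symm
        · exfalso; apply hg3 x
          simpa [F] using hval
        · rfl
      rw [this]
    · exfalso
      have hd : Disjoint (cnbr G (x : V)) (cnbr G (x' : V)) :=
        hpack x.2 x'.2 (fun hc => hxx (Subtype.coe_injective hc))
      exact Set.disjoint_left.1 hd (hmem x i) (hval ▸ hmem x' i')
  have hle : Nat.card (P × Bool) ≤ Nat.card T :=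
    Nat.card_le_card_of_injective F Finj
  rw [Nat.card_prod, Nat.card_coe_set_eq, Nat.card_eq_fintype_card,
    Fintype.card_bool, Nat.card_coe_set_eq] at hle
  omega

/-- Counting: a packing is at most as large as any dominating set. -/
lemma packing_le_dom {P D : Set V} (hpack : IsPacking G P) (hD : IsDomSet G D) :
    P.ncard ≤ D.ncard := by
  classical
  have key : ∀ x : P, ∃ z : V, z ∈ D ∧ z ∈ cnbr G (x : V) := by
    rintro ⟨x, hx⟩
    obtain ⟨d, hd, hmem⟩ := exists_dominator hD x
    refine ⟨d, hd, ?_⟩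
    rcases mem_cnbr.1 hmem with h | h
    · exact h ▸ mem_cnbr_self G x
    · exact mem_cnbr_of_adj h.symm
  choose e he1 he2 using key
  let F : P → D := fun x => ⟨e x, he1 x⟩
  have Finj : Function.Injective F := by
    intro x x' h
    have hval : e x = e x' := congrArg Subtype.val h
    by_contra hxx
    have hd : Disjoint (cnbr G (x : V)) (cnbr G (x' : V)) :=
      hpack x.2 x'.2 (fun hc => hxx (Subtype.ext hc))
    exact Set.disjoint_left.1 hd (he2 x) (hval ▸ he2 x')
  have hle : Nat.card P ≤ Nat.card D := Nat.card_le_card_of_injective F Finj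
  rwa [Nat.card_coe_set_eq, Nat.card_coe_set_eq] at hle

lemma easy_dir (hiso : NoIsolated G) {S : Set V} (hsp : ∀ x ∈ S, Special G x)
    (hpack : IsPacking G S) (hdom : IsDomSet G S) :
    totalDomNum G = 2 * domNum G := by
  obtain ⟨D, hD, hDc⟩ := exists_minDomSet G
  obtain ⟨T, hT, hTc⟩ := exists_minTotalDomSet hiso
  have h1 : S.ncard ≤ domNum G := hDc ▸ packing_le_dom hpack hD
  have h2 : domNum G ≤ S.ncard := domNum_le hdom
  have h3 : 2 * S.ncard ≤ totalDomNum G := hTc ▸ two_mul_packing_le hpack hsp hT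
  have h4 : totalDomNum G ≤ 2 * domNum G := totalDomNum_le_two_mul_domNum hiso
  omega

/-- Every minimum dominating set is a packing when the total domination number is twice
the domination number. -/
lemma minDom_packing (hiso : NoIsolated G) (heq : totalDomNum G = 2 * domNum G)
    {D : Set V} (hD : IsDomSet G D) (hDmin : D.ncard = domNum G) : IsPacking G D := by
  classical
  intro u hu v hv huv
  by_contra hnd
  obtain ⟨w, hwu, hwv⟩ := Set.not_disjoint_iff.1 hnd
  choose nb hnb using hiso
  have h2D : 2 ≤ D.ncard := by
    have : ({u, v} : Set V).ncard ≤ D.ncard :=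
      Set.ncard_le_ncard (by intro z hz; rcases hz with rfl | rfl; exacts [hu, hv])
        (Set.toFinite D)
    rwa [Set.ncard_pair huv] at this
  by_cases hadj : G.Adj u v
  · have hT : IsTotalDomSet G (D ∪ nb '' (D \ {u, v})) := by
      intro x
      by_cases hx : x ∈ D
      · by_cases hxu : x = u
        · exact ⟨v, Or.inl hv, hxu ▸ hadj.symm⟩
        · by_cases hxv : x = v
          · exact ⟨u, Or.inl hu, hxv ▸ hadj⟩
          · exact ⟨nb x, Or.inr ⟨x, ⟨hx, by simp [hxu, hxv]⟩, rfl⟩, (hnb x).symm⟩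
      · obtain ⟨d, hd, hdx⟩ := hD x hx
        exact ⟨d, Or.inl hd, hdx⟩
    have hdiffle : (D \ {u, v}).ncard ≤ D.ncard - 2 := by
      rw [Set.ncard_diff (by intro z hz; rcases hz with rfl | rfl; exacts [hu, hv]),
        Set.ncard_pair huv]
    have hcard : totalDomNum G ≤ D.ncard + (D.ncard - 2) := by
      calc totalDomNum G ≤ (D ∪ nb '' (D \ {u, v})).ncard := totalDomNum_le hT
        _ ≤ D.ncard + (nb '' (D \ {u, v})).ncard := Set.ncard_union_le _ _
        _ ≤ D.ncard + (D.ncard - 2) := by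
            have h5 := Set.ncard_image_le (s := D \ {u, v}) (f := nb) (Set.toFinite _)
            omega
    rw [heq, ← hDmin] at hcard
    omega
  · have hwune : w ≠ u := by
      rintro rfl
      exact hadj (adj_of_mem_cnbr hwv (fun h => huv h)).symm
    have hwvne : w ≠ v := by
      rintro rfl
      exact hadj (adj_of_mem_cnbr hwu (fun h => huv h.symm))
    have huw : G.Adj u w := adj_of_mem_cnbr hwu hwune
    have hvw : G.Adj v w := adj_of_mem_cnbr hwv hwvne
    have hT : IsTotalDomSet G (D ∪ {w} ∪ nb '' (D \ {u, v})) := by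
      intro x
      by_cases hx : x ∈ D
      · by_cases hxu : x = u
        · exact ⟨w, Or.inl (Or.inr rfl), hxu ▸ huw.symm⟩
        · by_cases hxv : x = v
          · exact ⟨w, Or.inl (Or.inr rfl), hxv ▸ hvw.symm⟩
          · exact ⟨nb x, Or.inr ⟨x, ⟨hx, by simp [hxu, hxv]⟩, rfl⟩, (hnb x).symm⟩
      · obtain ⟨d, hd, hdx⟩ := hD x hx
        exact ⟨d, Or.inl (Or.inl hd), hdx⟩
    have hdiffle : (D \ {u, v}).ncard ≤ D.ncard - 2 := by
      rw [Set.ncard_diff (by intro z hz; rcases hz with rfl | rfl; exacts [hu, hv]),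
        Set.ncard_pair huv]
    have hcard : totalDomNum G ≤ D.ncard + 1 + (D.ncard - 2) := by
      calc totalDomNum G ≤ (D ∪ {w} ∪ nb '' (D \ {u, v})).ncard := totalDomNum_le hT
        _ ≤ (D ∪ {w}).ncard + (nb '' (D \ {u, v})).ncard := Set.ncard_union_le _ _
        _ ≤ D.ncard + 1 + (D.ncard - 2) := by
            have h5 := Set.ncard_image_le (s := D \ {u, v}) (f := nb) (Set.toFinite _)
            have h6 : (D ∪ {w}).ncard ≤ D.ncard + 1 := by
              have := Set.ncard_union_le D ({w} : Set V)
              simpa using this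
            omega
    rw [heq, ← hDmin] at hcard
    omega

/-- The common witness lemma. -/
lemma common_witness (hH1 : Free H1 G) (hH2 : Free H2 G) (hC6 : Free (cycleGraph 6) G)
    {v d : V} (hnbr : ∃ z0, G.Adj d z0) (hvd : ¬ G.Adj v d)
    (hdisj : ∀ x, x ∈ cnbr G v → x ∉ cnbr G d) :
    ∃ z, G.Adj d z ∧ ∀ x, G.Adj v x →
      (∃ y, G.Adj x y ∧ G.Adj d y ∧ y ∉ cnbr G v) → G.Adj z x := by
  classical
  set X : Set V := {x | G.Adj v x ∧ ∃ y, G.Adj x y ∧ G.Adj d y ∧ y ∉ cnbr G v} with hX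
  set W : V → Set V := fun x => {y | G.Adj x y ∧ G.Adj d y ∧ y ∉ cnbr G v} with hW
  by_cases hXne : X.Nonempty
  · set f : V → ℕ := fun y => {x | x ∈ X ∧ y ∈ W x}.ncard with hf
    obtain ⟨z, _, hmax⟩ := Set.exists_max_image (Set.univ : Set V) f
      (Set.toFinite _) ⟨hXne.choose, Set.mem_univ _⟩
    obtain ⟨x0, hx0X⟩ := hXne
    obtain ⟨y0, hy0⟩ := hx0X.2
    have hy0W : y0 ∈ W x0 := hy0
    have hfy0 : 1 ≤ f y0 := by
      have hne : ({x | x ∈ X ∧ y0 ∈ W x}).Nonempty := ⟨x0, hx0X, hy0W⟩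
      have := (Set.ncard_pos (Set.toFinite _)).2 hne
      exact this
    have hfz : 1 ≤ f z := le_trans hfy0 (hmax y0 (Set.mem_univ _))
    have hSz : ({x | x ∈ X ∧ z ∈ W x}).Nonempty := by
      rw [← Set.ncard_pos (Set.toFinite _)]
      exact hfz
    obtain ⟨x1, hx1X, hx1z⟩ := hSz
    refine ⟨z, hx1z.2.1, ?_⟩
    intro x hvx hex
    have hxX : x ∈ X := ⟨hvx, hex⟩
    by_contra hzx
    have hznW : z ∉ W x := fun h => hzx h.1.symm
    obtain ⟨y2, hy2x, hy2d, hy2v⟩ := hex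
    have hy2W : y2 ∈ W x := ⟨hy2x, hy2d, hy2v⟩
    have hy2z : y2 ≠ z := fun h => hznW (h ▸ hy2W)
    have hsub : {x' | x' ∈ X ∧ z ∈ W x'} ⊆ {x' | x' ∈ X ∧ y2 ∈ W x'} := by
      rintro x' ⟨hx'X, hx'z⟩
      have hxne : x' ≠ x := fun h => hznW (h ▸ hx'z)
      have hor : G.Adj x' y2 ∨ G.Adj x z := by
        by_contra hno
        push_neg at hno
        obtain ⟨hn6, hn7⟩ := hno
        have hvne : ∀ y : V, y ∉ cnbr G v → v ≠ y ∧ ¬ G.Adj v y := fun y hy =>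
          ⟨ne_of_not_mem_cnbr hy, not_adj_of_not_mem_cnbr hy⟩
        have hzv := hvne z hx'z.2.2
        have hy2vv := hvne y2 hy2v
        have hxd : ∀ x'' : V, G.Adj v x'' → x'' ≠ d ∧ ¬ G.Adj x'' d := by
          intro x'' hadj
          have hnm := hdisj x'' (mem_cnbr_of_adj hadj)
          exact ⟨fun h => hnm (h ▸ mem_cnbr_self G d),
            fun h => hnm (mem_cnbr_of_adj h.symm)⟩
        have hx'd := hxd x' hx'X.1
        have hxd' := hxd x hvx
        have hxy : ∀ (x'' y : V), G.Adj v x'' → y ∉ cnbr G v → x'' ≠ y := by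
          intro x'' y hadjv hy h
          exact hy (h ▸ mem_cnbr_of_adj hadjv)
        exact six_lemma hH1 hH2 hC6
          hx'X.1 hx'z.1 hx'z.2.1.symm hy2d hy2x.symm hvx.symm
          hzv.2 hy2vv.2 hvd hx'd.2 hxd'.2 hn6 hn7
          hzv.1 hy2vv.1 (fun h => hdisj v (mem_cnbr_self G v) (h ▸ mem_cnbr_self G d))
          hx'd.1 hxd'.1 (hxy x' y2 hx'X.1 hy2v) (hxy x z hvx hx'z.2.2) hxne
          (fun h => hy2z h.symm)
      rcases hor with h | h
      · exact ⟨hx'X, h, hy2d, hy2v⟩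
      · exact absurd h.symm hzx
    have hss : {x' | x' ∈ X ∧ z ∈ W x'} ⊂ {x' | x' ∈ X ∧ y2 ∈ W x'} :=
      ⟨hsub, fun h => hznW (h ⟨hxX, hy2W⟩).2⟩
    have hlt : f z < f y2 := Set.ncard_lt_ncard hss (Set.toFinite _)
    have := hmax y2 (Set.mem_univ _)
    omega
  · obtain ⟨z0, hz0⟩ := hnbr
    exact ⟨z0, hz0, fun x hvx hex => absurd ⟨hvx, hex⟩ (fun h => hXne ⟨x, h⟩)⟩

/-- Every vertex of a minimum dominating set is special. -/
lemma minDom_special (hiso : NoIsolated G)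
    (hH1 : Free H1 G) (hH2 : Free H2 G) (hC6 : Free (cycleGraph 6) G)
    (heq : totalDomNum G = 2 * domNum G)
    {D : Set V} (hD : IsDomSet G D) (hDmin : D.ncard = domNum G)
    (hpack : IsPacking G D) : ∀ v ∈ D, Special G v := by
  classical
  intro v hv
  by_contra hns
  have hM : ∃ u ∈ Mset G v, Dset G v ⊆ G.neighborSet u := by
    by_contra hM
    obtain ⟨u0, hu0⟩ := hiso v
    exact hns ⟨⟨u0, hu0⟩, hM⟩
  obtain ⟨u, ⟨hvu, w, huw, hwv⟩, hDu⟩ := hM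
  choose df hdf1 hdf2 using exists_dominator hD
  have hdisj : ∀ d, d ∈ D → d ≠ v → ∀ x, x ∈ cnbr G v → x ∉ cnbr G d := by
    intro d hd hdv x hx hxd
    exact Set.disjoint_left.1 (hpack hv hd hdv.symm) hx hxd
  have hz : ∀ d : V, ∃ z : V, d ∈ D → d ≠ v →
      (G.Adj d z ∧ ∀ x, G.Adj v x →
        (∃ y, G.Adj x y ∧ G.Adj d y ∧ y ∉ cnbr G v) → G.Adj z x) := by
    intro d
    by_cases hcond : d ∈ D ∧ d ≠ v
    · obtain ⟨z, hz1, hz2⟩ := common_witness hH1 hH2 hC6 (hiso d)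
        (fun h => hdisj d hcond.1 hcond.2 d (mem_cnbr_of_adj h) (mem_cnbr_self G d))
        (hdisj d hcond.1 hcond.2)
      exact ⟨z, fun _ _ => ⟨hz1, hz2⟩⟩
    · exact ⟨d, fun h1 h2 => absurd ⟨h1, h2⟩ hcond⟩
  choose zf hzf using hz
  have houtside : ∀ y : V, y ∉ cnbr G v → df y ≠ v ∧ df y ∈ D := by
    intro y hy
    refine ⟨fun h => hy (h ▸ hdf2 y), hdf1 y⟩
  have hT : IsTotalDomSet G ((D \ {v}) ∪ zf '' (D \ {v}) ∪ {u}) := by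
    intro x
    by_cases hdv : df x = v
    · have hxv : x ∈ cnbr G v := hdv ▸ hdf2 x
      rcases mem_cnbr.1 hxv with rfl | hvx
      · exact ⟨u, Or.inr rfl, hvu.symm⟩
      · by_cases hux : x = u
        · subst hux
          obtain ⟨hd2v, hd2D⟩ := houtside w hwv
          rcases mem_cnbr.1 (hdf2 w) with hww | hd2w
          · refine ⟨df w, Or.inl (Or.inl ⟨hd2D, by simp [hd2v]⟩), ?_⟩
            rw [← hww]
            exact huw.symm
          · refine ⟨zf (df w), Or.inl (Or.inr ⟨df w, ⟨hd2D, by simp [hd2v]⟩, rfl⟩), ?_⟩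
            exact (hzf (df w) hd2D hd2v).2 x hvx ⟨w, huw, hd2w, hwv⟩
        · by_cases huxadj : G.Adj u x
          · exact ⟨u, Or.inr rfl, huxadj⟩
          · by_cases hy : ∃ y, G.Adj x y ∧ y ∉ cnbr G v
            · obtain ⟨y, hxy, hyv⟩ := hy
              obtain ⟨hd2v, hd2D⟩ := houtside y hyv
              rcases mem_cnbr.1 (hdf2 y) with hyy | hd2y
              · exfalso
                exact hdisj (df y) hd2D hd2v x hxv (mem_cnbr_of_adj (hyy ▸ hxy).symm)
              · refine ⟨zf (df y), Or.inl (Or.inr ⟨df y, ⟨hd2D, by simp [hd2v]⟩, rfl⟩), ?_⟩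
                exact (hzf (df y) hd2D hd2v).2 x hvx ⟨y, hxy, hd2y, hyv⟩
            · push_neg at hy
              have hsub : cnbr G x ⊆ cnbr G v := by
                intro y hyx
                rcases mem_cnbr.1 hyx with rfl | hxy
                · exact hxv
                · exact hy y hxy
              by_cases htw : cnbr G x = cnbr G v
              · exfalso
                have humem : u ∈ cnbr G x := htw ▸ mem_cnbr_of_adj hvu
                exact huxadj (adj_of_mem_cnbr humem (fun h => hux h.symm)).symm
              · exfalso
                exact huxadj (hDu ⟨hvx, htw, hsub⟩)
    · rcases mem_cnbr.1 (hdf2 x) with hxd | hdx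
      · refine ⟨zf (df x), Or.inl (Or.inr ⟨df x, ⟨hdf1 x, by simp [hdv]⟩, rfl⟩), ?_⟩
        have := ((hzf (df x) (hdf1 x) hdv).1).symm
        rw [← hxd] at this ⊢
        exact this
      · exact ⟨df x, Or.inl (Or.inl ⟨hdf1 x, by simp [hdv]⟩), hdx⟩
  have h1D : 1 ≤ D.ncard := by
    have := (Set.ncard_pos (Set.toFinite D)).2 ⟨v, hv⟩
    omega
  have hdiffc : (D \ {v}).ncard = D.ncard - 1 := by
    rw [Set.ncard_diff (by simpa using hv), Set.ncard_singleton]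
  have hcard : totalDomNum G ≤ (D.ncard - 1) + (D.ncard - 1) + 1 := by
    calc totalDomNum G ≤ ((D \ {v}) ∪ zf '' (D \ {v}) ∪ {u}).ncard := totalDomNum_le hT
      _ ≤ ((D \ {v}) ∪ zf '' (D \ {v})).ncard + ({u} : Set V).ncard :=
          Set.ncard_union_le _ _
      _ ≤ (D \ {v}).ncard + (zf '' (D \ {v})).ncard + 1 := by
          have h8 := Set.ncard_union_le (D \ {v}) (zf '' (D \ {v}))
          have h7 : ({u} : Set V).ncard = 1 := Set.ncard_singleton u
          omega
      _ ≤ (D.ncard - 1) + (D.ncard - 1) + 1 := by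
          have h5 := Set.ncard_image_le (s := D \ {v}) (f := zf) (Set.toFinite _)
          omega
  rw [heq, ← hDmin] at hcard
  omega

/-- Any special vertex adjacent to a vertex of a minimum dominating set is a true twin
of that vertex. -/
lemma special_twin (hiso : NoIsolated G) (heq : totalDomNum G = 2 * domNum G)
    {D : Set V} (hD : IsDomSet G D) (hDmin : D.ncard = domNum G)
    (hpack : IsPacking G D) (hsp : ∀ d ∈ D, Special G d)
    {v s : V} (hv : v ∈ D) (hadj : G.Adj v s) (hs : Special G s) :
    cnbr G s = cnbr G v := by
  classical
  by_contra hne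
  have hvmem : v ∈ cnbr G s := mem_cnbr_of_adj hadj.symm
  have hsmem : s ∈ cnbr G v := mem_cnbr_of_adj hadj
  by_cases hsub : cnbr G s ⊆ cnbr G v
  · obtain ⟨w, hwv, hws⟩ := Set.not_subset.1 (fun h => hne (le_antisymm hsub h))
    have hwne : w ≠ v := fun h => hws (h ▸ hvmem)
    have hvMs : v ∈ Mset G s := ⟨hadj.symm, w, adj_of_mem_cnbr hwv hwne, hws⟩
    apply hs.2
    refine ⟨v, hvMs, ?_⟩
    rintro t ⟨hst, htne, htsub⟩
    have htv : t ∈ cnbr G v := hsub (htsub (mem_cnbr_self G t))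
    rcases mem_cnbr.1 htv with rfl | h
    · exact absurd (le_antisymm htsub hsub).symm (fun h => htne h.symm)
    · exact h
  · obtain ⟨y0, hy0s, hy0v⟩ := Set.not_subset.1 hsub
    have hy0ne : y0 ≠ s := fun h => hy0v (h ▸ hsmem)
    have hsy0 : G.Adj s y0 := adj_of_mem_cnbr hy0s hy0ne
    by_cases hsub2 : cnbr G v ⊆ cnbr G s
    · apply (hsp v hv).2
      refine ⟨s, ⟨hadj, y0, hsy0, hy0v⟩, ?_⟩
      rintro t ⟨hvt, htne, htsub⟩
      have hts : t ∈ cnbr G s := hsub2 (htsub (mem_cnbr_self G t))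
      rcases mem_cnbr.1 hts with rfl | h
      · exact absurd htsub hsub
      · exact h
    · obtain ⟨w, hwv, hws⟩ := Set.not_subset.1 hsub2
      have hwne : w ≠ v := fun h => hws (h ▸ hvmem)
      have hvMs : v ∈ Mset G s := ⟨hadj.symm, w, adj_of_mem_cnbr hwv hwne, hws⟩
      have hnsub : ¬ Dset G s ⊆ G.neighborSet v := fun hc => hs.2 ⟨v, hvMs, hc⟩
      obtain ⟨t, ⟨hst, htne, htsub⟩, htv⟩ := Set.not_subset.1 hnsub
      have htnev : t ≠ v := fun h => hsub2 (h ▸ htsub)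
      have htnv : t ∉ cnbr G v := by
        intro hc
        rcases mem_cnbr.1 hc with h | h
        · exact htnev h
        · exact htv h
      obtain ⟨d', hd'D, htd'⟩ := exists_dominator hD t
      have hd'v : d' ≠ v := fun h => htnv (h ▸ htd')
      have hdisjvd : Disjoint (cnbr G v) (cnbr G d') := hpack hv hd'D hd'v.symm
      have htd : t = d' := by
        by_contra htd
        have hadj' : G.Adj d' t := adj_of_mem_cnbr htd' htd
        have hd's : d' ∈ cnbr G s := htsub (mem_cnbr_of_adj hadj'.symm)
        rcases mem_cnbr.1 hd's with h | h
        · exact Set.disjoint_left.1 hdisjvd hsmem (h ▸ mem_cnbr_self G d')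
        · exact Set.disjoint_left.1 hdisjvd hsmem (mem_cnbr_of_adj h.symm)
      subst htd
      -- now `t ∈ D`, `t ≠ v`, and `cnbr t ⊆ cnbr s`: build a small total dominating set
      choose nb hnb using hiso
      have htvne : t ≠ v := htnev
      have h2D : 2 ≤ D.ncard := by
        have hsubtv : ({t, v} : Set V).ncard ≤ D.ncard :=
          Set.ncard_le_ncard (by intro z hz; rcases hz with rfl | rfl; exacts [hd'D, hv])
            (Set.toFinite D)
        rwa [Set.ncard_pair htvne] at hsubtv
      have hT : IsTotalDomSet G ((D \ {v, t}) ∪ nb '' (D \ {v, t}) ∪ {v, s}) := by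
        intro x
        obtain ⟨d, hdD, hxd⟩ := exists_dominator hD x
        by_cases hdv : d = v
        · subst hdv
          rcases mem_cnbr.1 hxd with rfl | hx
          · exact ⟨s, Or.inr (Or.inr rfl), hadj.symm⟩
          · exact ⟨d, Or.inr (Or.inl rfl), hx⟩
        · by_cases hdt : d = t
          · subst hdt
            have hxs : x ∈ cnbr G s := htsub hxd
            rcases mem_cnbr.1 hxs with rfl | hx
            · exact ⟨v, Or.inr (Or.inl rfl), hadj⟩
            · exact ⟨s, Or.inr (Or.inr rfl), hx⟩
          · rcases mem_cnbr.1 hxd with rfl | hx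
            · exact ⟨nb x, Or.inl (Or.inr ⟨x, ⟨hdD, by simp [hdv, hdt]⟩, rfl⟩),
                (hnb x).symm⟩
            · exact ⟨d, Or.inl (Or.inl ⟨hdD, by simp [hdv, hdt]⟩), hx⟩
      have hdiffle : (D \ {v, t}).ncard ≤ D.ncard - 2 := by
        rw [Set.ncard_diff (by intro z hz; rcases hz with rfl | rfl; exacts [hv, hd'D]),
          Set.ncard_pair (fun h => htvne h.symm)]
      have hcard : totalDomNum G ≤ (D.ncard - 2) + (D.ncard - 2) + 2 := by
        calc totalDomNum G ≤ ((D \ {v, t}) ∪ nb '' (D \ {v, t}) ∪ {v, s}).ncard :=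
              totalDomNum_le hT
          _ ≤ ((D \ {v, t}) ∪ nb '' (D \ {v, t})).ncard + ({v, s} : Set V).ncard :=
              Set.ncard_union_le _ _
          _ ≤ (D \ {v, t}).ncard + (nb '' (D \ {v, t})).ncard + 2 := by
              have h8 := Set.ncard_union_le (D \ {v, t}) (nb '' (D \ {v, t}))
              have h7 : ({v, s} : Set V).ncard ≤ 2 := by
                have := Set.ncard_insert_le v ({s} : Set V)
                simpa [Set.ncard_singleton] using this
              omega
          _ ≤ (D.ncard - 2) + (D.ncard - 2) + 2 := by
              have h5 := Set.ncard_image_le (s := D \ {v, t}) (f := nb) (Set.toFinite _)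
              omega
      rw [heq, ← hDmin] at hcard
      omega

end DomBasics

/-- **Main Theorem.** For an `(H₁,H₂,C₆)`-free graph `G` with no isolated vertices and an
`S(G)`-set `S`: `γₜ(G) = 2γ(G)` iff `S` is both a packing and a dominating set of `G`. -/
theorem stmt0 {V : Type*} [Fintype V] (G : SimpleGraph V) (hiso : NoIsolated G)
    (hH1 : Free H1 G) (hH2 : Free H2 G) (hC6 : Free (cycleGraph 6) G)
    (S : Set V) (hS : IsSGSet G S) :
    totalDomNum G = 2 * domNum G ↔ IsPacking G S ∧ IsDomSet G S := by
  constructor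
  · intro heq
    obtain ⟨D, hD, hDmin⟩ := exists_minDomSet G
    have hpack : IsPacking G D := minDom_packing hiso heq hD hDmin
    have hsp : ∀ d ∈ D, Special G d := minDom_special hiso hH1 hH2 hC6 heq hD hDmin hpack
    have htwin : ∀ x, Special G x → ∃ d ∈ D, cnbr G x = cnbr G d := by
      intro x hx
      obtain ⟨d, hd, hmem⟩ := exists_dominator hD x
      rcases mem_cnbr.1 hmem with rfl | h
      · exact ⟨x, hd, rfl⟩
      · exact ⟨d, hd, special_twin hiso heq hD hDmin hpack hsp hd h hx⟩
    constructor
    · intro x1 h1 x2 h2 hne12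
      obtain ⟨d1, hd1, he1⟩ := htwin x1 (hS.1 x1 h1)
      obtain ⟨d2, hd2, he2⟩ := htwin x2 (hS.1 x2 h2)
      by_cases hdd : d1 = d2
      · exfalso
        subst hdd
        have hTT : x2 ∈ Tset G x1 := by
          show cnbr G x2 = cnbr G x1
          rw [he1, he2]
        obtain ⟨u0, _, huniq⟩ := hS.2 x1 (hS.1 x1 h1)
        have e1 : x1 = u0 := huniq x1 ⟨h1, rfl⟩
        have e2 : x2 = u0 := huniq x2 ⟨h2, hTT⟩
        exact hne12 (e1.trans e2.symm)
      · rw [he1, he2]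
        exact hpack hd1 hd2 hdd
    · intro x hxS
      obtain ⟨d, hd, hmem⟩ := exists_dominator hD x
      obtain ⟨s, ⟨hsS, hsT⟩, _⟩ := hS.2 d (hsp d hd)
      have hxmem : x ∈ cnbr G s := by
        rw [show cnbr G s = cnbr G d from hsT]
        exact hmem
      have hxs : x ≠ s := fun h => hxS (h ▸ hsS)
      exact ⟨s, hsS, adj_of_mem_cnbr hxmem hxs⟩
  · rintro ⟨hpack, hdom⟩
    exact easy_dir hiso (fun x hx => hS.1 x hx) hpack hdom

end TotalDom
end

section
/- Let G be a finite simple graph with no isolated vertices satisfying γt(G) = 2γ(G), and let S be a subset of V(G). Then S is a minimum dominating set of G if and only if S is both a packing and a dominating set of G. -/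
open SimpleGraph

namespace TotalDom

variable {V : Type*}

/-- In a graph `G` with no isolated vertices satisfying `γₜ(G) = 2γ(G)`, a set `S` is a
minimum dominating set iff it is both a packing and a dominating set. -/
theorem stmt4 {V : Type*} [Fintype V] (G : SimpleGraph V) (hiso : NoIsolated G)
    (h : totalDomNum G = 2 * domNum G) (S : Set V) :
    IsMinDomSet G S ↔ IsPacking G S ∧ IsDomSet G S := by
  classical
  have univDom : IsDomSet G Set.univ := fun v hv => absurd (Set.mem_univ v) hv
  obtain ⟨D, hD, hDcard⟩ : ∃ D : Set V, IsDomSet G D ∧ D.ncard = domNum G := by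
    obtain ⟨D, hD, hc⟩ := Nat.sInf_mem (⟨_, Set.univ, univDom, rfl⟩ :
      {n | ∃ S : Set V, IsDomSet G S ∧ S.ncard = n}.Nonempty)
    exact ⟨D, hD, hc⟩
  have key : ∀ T : Set V, IsTotalDomSet G T → totalDomNum G ≤ T.ncard := fun T hT =>
    Nat.sInf_le ⟨T, hT, rfl⟩
  constructor
  · rintro ⟨hSdom, hScard⟩
    refine ⟨?_, hSdom⟩
    intro u hu v hv huv
    by_contra hnd
    rw [Set.not_disjoint_iff] at hnd
    obtain ⟨w, hwu, hwv⟩ := hnd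
    have hfadj : ∀ x, G.Adj x (Classical.choose (hiso x)) := fun x => Classical.choose_spec (hiso x)
    set f : V → V := fun x => Classical.choose (hiso x) with hf
    set A : Set V := S \ {u, v} with hA
    have hcardS : S.ncard = A.ncard + 2 := by
      have h1 : S = insert u (insert v A) := by
        ext x
        simp only [hA, Set.mem_insert_iff, Set.mem_diff, Set.mem_insert_iff,
          Set.mem_singleton_iff]
        constructor
        · intro hx
          by_cases hxu : x = u
          · exact Or.inl hxu
          by_cases hxv : x = v
          · exact Or.inr (Or.inl hxv)
          · exact Or.inr (Or.inr ⟨hx, fun h => h.elim hxu hxv⟩)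
        · rintro (rfl | rfl | ⟨hx, _⟩) <;> assumption
      have hvA : v ∉ A := by simp [hA]
      have huA : u ∉ insert v A := by simp [hA, huv]
      rw [h1, Set.ncard_insert_of_notMem huA, Set.ncard_insert_of_notMem hvA]
    -- case A: u and v adjacent
    have caseA : ¬ G.Adj u v := by
      intro hadj
      set T : Set V := S ∪ (f '' A) with hT
      have hTtd : IsTotalDomSet G T := by
        intro x
        by_cases hx : x ∈ S
        · by_cases hxu : x = u
          · exact ⟨v, Or.inl hv, hxu ▸ hadj.symm⟩
          by_cases hxv : x = v
          · exact ⟨u, Or.inl hu, hxv ▸ hadj⟩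
          · exact ⟨f x, Or.inr (Set.mem_image_of_mem f (show x ∈ A by simp [hA, hx, hxu, hxv])), (hfadj x).symm⟩
        · obtain ⟨y, hy, hadj'⟩ := hSdom x hx
          exact ⟨y, Or.inl hy, hadj'⟩
      have h1 : totalDomNum G ≤ T.ncard := key T hTtd
      have h2 : T.ncard ≤ S.ncard + A.ncard :=
        le_trans (Set.ncard_union_le _ _) (Nat.add_le_add_left (Set.ncard_image_le (Set.toFinite A)) _)
      rw [h, hScard.symm, hcardS] at *
      omega
    -- resolve w
    have hadjuw : G.Adj u w := by
      rcases hwu with rfl | hw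
      · rcases hwv with rfl | hw'
        · exact absurd rfl huv
        · exact absurd hw'.symm caseA
      · exact hw
    have hadjvw : G.Adj v w := by
      rcases hwv with rfl | hw'
      · exact absurd hadjuw caseA
      · exact hw'
    -- case B: common neighbor w
    set T : Set V := insert w (S ∪ (f '' A)) with hT
    have hTtd : IsTotalDomSet G T := by
      intro x
      by_cases hx : x ∈ S
      · by_cases hxu : x = u
        · exact ⟨w, Set.mem_insert _ _, hxu ▸ hadjuw.symm⟩
        by_cases hxv : x = v
        · exact ⟨w, Set.mem_insert _ _, hxv ▸ hadjvw.symm⟩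
        · exact ⟨f x, Or.inr (Or.inr (Set.mem_image_of_mem f (show x ∈ A by simp [hA, hx, hxu, hxv]))), (hfadj x).symm⟩
      · obtain ⟨y, hy, hadj'⟩ := hSdom x hx
        exact ⟨y, Or.inr (Or.inl hy), hadj'⟩
    have h1 : totalDomNum G ≤ T.ncard := key T hTtd
    have h2 : T.ncard ≤ S.ncard + A.ncard + 1 := by
      refine le_trans (Set.ncard_insert_le _ _) ?_
      have := le_trans (Set.ncard_union_le S (f '' A))
        (Nat.add_le_add_left (Set.ncard_image_le (Set.toFinite A)) _)
      omega
    rw [h, hScard.symm, hcardS] at *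
    omega
  · rintro ⟨hpack, hdom⟩
    refine ⟨hdom, le_antisymm ?_ (Nat.sInf_le ⟨S, hdom, rfl⟩)⟩
    -- S.ncard ≤ domNum G = D.ncard
    have hg : ∀ x : V, ∃ y, y ∈ D ∧ y ∈ cnbr G x := by
      intro x
      by_cases hx : x ∈ D
      · exact ⟨x, hx, Set.mem_insert _ _⟩
      · obtain ⟨y, hy, hadj⟩ := hD x hx
        exact ⟨y, hy, Or.inr hadj.symm⟩
    choose g hgD hgc using hg
    have hinj : Set.InjOn g S := by
      intro x hx y hy hxy
      by_contra hne
      exact Set.disjoint_left.mp (hpack hx hy hne) (hgc x) (hxy ▸ hgc y)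
    calc S.ncard = (g '' S).ncard := (Set.ncard_image_of_injOn hinj).symm
      _ ≤ D.ncard := Set.ncard_le_ncard (by rintro _ ⟨x, hx, rfl⟩; exact hgD x) (Set.toFinite D)
      _ = domNum G := hDcard

end TotalDom
end

section
/- Let G be a finite simple graph with no isolated vertices and let S be an S(G)-set. If S is both a packing and a dominating set of G, then γt(G) = 2γ(G). -/
open SimpleGraph

namespace TotalDom

variable {V : Type*}

/-- If an `S(G)`-set of a graph `G` with no isolated vertices is both a packing and a
dominating set, then `γₜ(G) = 2γ(G)`. -/
theorem stmt5 {V : Type*} [Fintype V] (G : SimpleGraph V) (hiso : NoIsolated G)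
    (S : Set V) (hS : IsSGSet G S)
    (hpack : IsPacking G S) (hdom : IsDomSet G S) :
    totalDomNum G = 2 * domNum G := by
  classical
  have hdom_le : domNum G ≤ S.ncard := Nat.sInf_le ⟨S, hdom, rfl⟩
  obtain ⟨D, hD, hDcard⟩ : ∃ D : Set V, IsDomSet G D ∧ D.ncard = domNum G := by
    have hne : {n | ∃ S : Set V, IsDomSet G S ∧ S.ncard = n}.Nonempty :=
      ⟨(Set.univ : Set V).ncard, Set.univ, fun v hv => absurd (Set.mem_univ v) hv, rfl⟩
    exact Nat.sInf_mem hne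
  choose f hf using hiso
  have hTtot : IsTotalDomSet G (D ∪ f '' D) := by
    intro v
    by_cases hv : v ∈ D
    · exact ⟨f v, Or.inr ⟨v, hv, rfl⟩, (hf v).symm⟩
    · obtain ⟨u, hu, huv⟩ := hD v hv
      exact ⟨u, Or.inl hu, huv⟩
  have hupper : totalDomNum G ≤ 2 * domNum G := by
    have h1 : totalDomNum G ≤ (D ∪ f '' D).ncard := Nat.sInf_le ⟨_, hTtot, rfl⟩
    have h2 : (D ∪ f '' D).ncard ≤ D.ncard + (f '' D).ncard := Set.ncard_union_le _ _
    have h3 : (f '' D).ncard ≤ D.ncard := Set.ncard_image_le (Set.toFinite D)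
    omega
  obtain ⟨T, hT, hTcard⟩ : ∃ T : Set V, IsTotalDomSet G T ∧ T.ncard = totalDomNum G := by
    have hne : {n | ∃ S : Set V, IsTotalDomSet G S ∧ S.ncard = n}.Nonempty := by
      refine ⟨(Set.univ : Set V).ncard, Set.univ, fun v => ?_, rfl⟩
      exact ⟨f v, Set.mem_univ _, (hf v).symm⟩
    exact Nat.sInf_mem hne
  have key : ∀ v ∈ S, 2 ≤ (T ∩ cnbr G v).ncard := by
    intro v hv
    by_contra hcon
    push_neg at hcon
    obtain ⟨u, huT, huv⟩ := hT v
    have humem : u ∈ T ∩ cnbr G v := ⟨huT, Or.inr huv.symm⟩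
    have heq : ∀ x ∈ T ∩ cnbr G v, x = u := by
      intro x hx
      have h1 : (T ∩ cnbr G v).ncard ≤ 1 := by omega
      exact (Set.ncard_le_one_iff_eq ((Set.toFinite _))).mp h1 |>.elim
        (fun h => absurd (h ▸ hx) (Set.notMem_empty x))
        (fun ⟨a, ha⟩ => by
          rw [ha] at hx humem
          simp only [Set.mem_singleton_iff] at hx humem
          rw [hx, humem])
    have hspec := hS.1 v hv
    apply hspec.2
    obtain ⟨w, hwT, hwu⟩ := hT u
    have hwv : w ∉ cnbr G v := by
      intro hwcn
      have := heq w ⟨hwT, hwcn⟩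
      exact hwu.ne (this ▸ rfl)
    refine ⟨u, ⟨huv.symm, w, hwu.symm, hwv⟩, ?_⟩
    intro x hx
    obtain ⟨t, htT, htx⟩ := hT x
    have htcn : t ∈ cnbr G x := Or.inr htx.symm
    have htv : t ∈ T ∩ cnbr G v := ⟨htT, hx.2.2 htcn⟩
    have := heq t htv
    subst this
    exact htx
  have hlow : 2 * S.ncard ≤ T.ncard := by
    have hdisj : ∀ u ∈ S.toFinset, ∀ v ∈ S.toFinset, u ≠ v →
        Disjoint ((T ∩ cnbr G u).toFinset) ((T ∩ cnbr G v).toFinset) := by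
      intro u hu v hv huv
      rw [Set.disjoint_toFinset]
      exact (hpack (Set.mem_toFinset.mp hu) (Set.mem_toFinset.mp hv) huv).mono
        Set.inter_subset_right Set.inter_subset_right
    calc 2 * S.ncard = ∑ _v ∈ S.toFinset, 2 := by
          rw [Finset.sum_const, Set.ncard_eq_toFinset_card']; ring
      _ ≤ ∑ v ∈ S.toFinset, ((T ∩ cnbr G v).toFinset).card := by
          apply Finset.sum_le_sum
          intro v hv
          have := key v (Set.mem_toFinset.mp hv)
          rwa [Set.ncard_eq_toFinset_card'] at this
      _ = (S.toFinset.biUnion fun v => (T ∩ cnbr G v).toFinset).card :=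
          (Finset.card_biUnion hdisj).symm
      _ ≤ T.toFinset.card := Finset.card_le_card (by
          intro x hx
          simp only [Finset.mem_biUnion, Set.mem_toFinset] at hx ⊢
          obtain ⟨v, _, hxv⟩ := hx
          exact hxv.1)
      _ = T.ncard := (Set.ncard_eq_toFinset_card' T).symm
  omega

end TotalDom
end
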